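/- arXiv:1807.02418 — 5 statements merged into one kernel-verified Lean document; each statement's English description precedes it below -/
import Mathlib

section
/- Let N ≥ 2 be an even integer, set x_i = 2πi/N for i = 0, …, N−1, and for fixed i let B_i : ℝ → ℝ be the continuous extension (with value 1 at x_i + 2πk, k ∈ ℤ) of the function x ↦ (1/N)·sin(N(x − x_i)/2)·cot((x − x_i)/2). Then B_i is differentiable on ℝ and Σ_{n=0}^{N−1} B_i′(x_n) = 0. -/
open Real Finset

lemma sum_exp_zero (N k : ℕ) (hk1 : 0 < k) (hk2 : k < N) :
    ∑ n ∈ Finset.range N, Complex.exp (((2*π*k*n/N : ℝ) : ℂ) * Complex.I) = 0 := by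
  have hN0 : (0:ℕ) < N := lt_trans hk1 hk2
  have hNR : (N:ℝ) ≠ 0 := Nat.cast_ne_zero.mpr hN0.ne'
  set z : ℂ := Complex.exp (((2*π*k/N : ℝ) : ℂ) * Complex.I) with hz
  have hterm : ∀ n : ℕ, Complex.exp (((2*π*k*n/N : ℝ) : ℂ) * Complex.I) = z ^ n := by
    intro n
    rw [hz, ← Complex.exp_nat_mul]
    congr 1
    push_cast
    ring
  have hz1 : z ≠ 1 := by
    rw [hz, Ne, Complex.exp_eq_one_iff]
    rintro ⟨m, hm⟩
    have him := congrArg Complex.im hm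
    simp [Complex.ofReal_mul, Complex.mul_I_im] at him
    -- him : 2*π*k/N = m * (2*π)
    have h2 : (2*π) * (k:ℝ) = (2*π) * ((m:ℝ)*N) := by
      field_simp at him
      linear_combination (2*π) * him
    have : (k:ℝ) = m * N := mul_left_cancel₀ (by positivity) h2
    have hk : (k:ℤ) = m * N := by exact_mod_cast this
    rcases le_or_gt m 0 with h | h
    · have : (k:ℤ) ≤ 0 := by
        rw [hk]
        exact mul_nonpos_of_nonpos_of_nonneg h (by positivity)
      omega
    · have : (N:ℤ) ≤ k := by
        rw [hk]
        nlinarith [Int.lt_iff_add_one_le.mp h]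
      omega
  have hzN : z ^ N = 1 := by
    rw [hz, ← Complex.exp_nat_mul]
    have : (N:ℂ) * (((2*π*k/N : ℝ):ℂ) * Complex.I) = (k:ℤ) * (2*π*Complex.I) := by
      have hNC : (N:ℂ) ≠ 0 := Nat.cast_ne_zero.mpr hN0.ne'
      push_cast
      field_simp
    rw [this, Complex.exp_int_mul_two_pi_mul_I]
  rw [Finset.sum_congr rfl (fun n _ => hterm n), geom_sum_eq hz1, hzN]
  simp

lemma sum_sin_shift (N k : ℕ) (hk1 : 0 < k) (hk2 : k < N) (a : ℝ) :
    ∑ n ∈ Finset.range N, Real.sin (2*π*k*n/N + a) = 0 := by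
  have h0 := sum_exp_zero N k hk1 hk2
  have h1 : ∑ n ∈ Finset.range N, Complex.exp (((2*π*k*n/N + a : ℝ) : ℂ) * Complex.I) = 0 := by
    have : ∀ n ∈ Finset.range N, Complex.exp (((2*π*k*n/N + a : ℝ) : ℂ) * Complex.I)
        = Complex.exp ((a:ℂ) * Complex.I) * Complex.exp (((2*π*k*n/N : ℝ) : ℂ) * Complex.I) := by
      intro n _
      rw [← Complex.exp_add]
      congr 1
      push_cast
      ring
    rw [Finset.sum_congr rfl this, ← Finset.mul_sum, h0, mul_zero]
  have h2 := congrArg Complex.im h1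
  rw [Complex.im_sum] at h2
  simp only [Complex.exp_ofReal_mul_I_im] at h2
  exact h2

lemma trig_id (M : ℕ) (hM : 1 ≤ M) (u : ℝ) :
    Real.sin (2*M*u) * Real.cos u =
      Real.sin u * (1 + Real.cos (2*M*u)) +
        2 * Real.sin u * ∑ k ∈ Finset.Ico 1 M, Real.cos (2*k*u) := by
  induction M, hM using Nat.le_induction with
  | base =>
    simp only [Nat.cast_one, Finset.Ico_self, Finset.sum_empty, mul_zero, add_zero]
    rw [show (2:ℝ)*1*u = 2*u by ring, Real.sin_two_mul, Real.cos_two_mul]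
    ring
  | succ M hM ih =>
    rw [Finset.sum_Ico_succ_top hM]
    have e1 : (2:ℝ)*(M+1:ℕ)*u = 2*M*u + 2*u := by push_cast; ring
    rw [e1, Real.sin_add, Real.cos_add, Real.sin_two_mul, Real.cos_two_mul]
    linear_combination (2*Real.cos u^2 - 1 + 2*Real.sin u^2) * ih +
      (2*Real.sin u + 2*Real.cos (2*M*u)*Real.sin u +
        4*Real.sin u * ∑ k ∈ Finset.Ico 1 M, Real.cos (2*k*u)) * (Real.sin_sq_add_cos_sq u)


/-- For even `N ≥ 2`, the continuous extension `B_i` of the trigonometric Lagrange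
basis function `x ↦ (1/N) sin(N(x − x_i)/2) cot((x − x_i)/2)` (with value `1` at the
points `x_i + 2πk`) is differentiable on `ℝ`, and the column sum of the spectral
differentiation matrix vanishes: `Σ_{n=0}^{N−1} B_i′(x_n) = 0`. -/
theorem trig_diff_matrix_column_sum
    (N : ℕ) (hN : 2 ≤ N) (hNeven : Even N)
    (x : Fin N → ℝ) (hx : ∀ n : Fin N, x n = 2 * π * n / N)
    (i : Fin N) (B : ℝ → ℝ)
    (hB : ∀ t : ℝ, (∀ k : ℤ, t ≠ x i + 2 * π * k) →
      B t = (1 / N) * Real.sin (N * (t - x i) / 2) * Real.cot ((t - x i) / 2))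
    (hB1 : ∀ k : ℤ, B (x i + 2 * π * k) = 1) :
    Differentiable ℝ B ∧ ∑ n : Fin N, deriv B (x n) = 0 := by
  obtain ⟨M, hMN⟩ := hNeven
  have hNM : N = 2 * M := by omega
  have hM1 : 1 ≤ M := by omega
  have hN0 : (N:ℝ) ≠ 0 := Nat.cast_ne_zero.mpr (by omega)
  set c := x i with hc
  set g : ℝ → ℝ := fun t =>
    (1/N) * ((1 + Real.cos ((M:ℝ)*(t-c))) + 2*∑ k ∈ Finset.Ico 1 M, Real.cos ((k:ℝ)*(t-c)))
    with hg
  -- B coincides with the smooth function g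
  have hBg : B = g := by
    funext t
    by_cases h : ∃ k : ℤ, t = c + 2*π*k
    · obtain ⟨m, hm⟩ := h
      rw [hm, hB1 m, hg]
      simp only
      have e1 : (M:ℝ)*((c + 2*π*m) - c) = ((M*m : ℤ) : ℝ) * (2*π) := by push_cast; ring
      rw [e1, Real.cos_int_mul_two_pi]
      rw [Finset.sum_congr rfl (fun k _ => by
        rw [show (k:ℝ)*((c + 2*π*m) - c) = (((k:ℤ)*m : ℤ) : ℝ) * (2*π) by push_cast; ring,
          Real.cos_int_mul_two_pi])]
      rw [Finset.sum_const, Nat.card_Ico, nsmul_eq_mul, mul_one,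
        Nat.cast_sub hM1, hNM]
      push_cast
      field_simp
      ring
    · push_neg at h
      rw [hB t h]
      set u := (t - c)/2 with hu
      have hsu : Real.sin u ≠ 0 := by
        intro h0
        rw [Real.sin_eq_zero_iff] at h0
        obtain ⟨m, hm⟩ := h0
        exact h m (by rw [hu] at hm; linarith)
      rw [Real.cot_eq_cos_div_sin]
      have hid := trig_id M hM1 u
      have eN : (N:ℝ)*(t - c)/2 = 2*(M:ℝ)*u := by rw [hu, hNM]; push_cast; ring
      rw [hg]
      simp only
      rw [eN, show (M:ℝ)*(t-c) = 2*(M:ℝ)*u by rw [hu]; ring]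
      rw [Finset.sum_congr rfl (fun k _ => by
        rw [show (k:ℝ)*(t-c) = 2*(k:ℝ)*u by rw [hu]; ring])]
      field_simp
      have hs : ∑ k ∈ Finset.Ico 1 M, Real.cos (2*(k:ℝ)*u) = ∑ k ∈ Finset.Ico 1 M, Real.cos (2*u*(k:ℝ)) :=
        Finset.sum_congr rfl (fun k _ => by ring_nf)
      linear_combination hid + 2 * Real.sin u * hs
  -- derivative of g
  set G : ℝ → ℝ := fun t =>
    (1/(N:ℝ)) * (-Real.sin ((M:ℝ)*(t-c)) * M +
      2 * ∑ k ∈ Finset.Ico 1 M, -Real.sin ((k:ℝ)*(t-c)) * k) with hG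
  have inner : ∀ (a t : ℝ), HasDerivAt (fun s => a*(s - c)) a t := by
    intro a t
    simpa using ((hasDerivAt_id t).sub_const c).const_mul a
  have hder : ∀ t, HasDerivAt g (G t) t := by
    intro t
    have h1 : HasDerivAt (fun s => 1 + Real.cos ((M:ℝ)*(s-c))) (-Real.sin ((M:ℝ)*(t-c)) * M) t :=
      ((inner M t).cos).const_add 1
    have h2 : HasDerivAt (fun s => ∑ k ∈ Finset.Ico 1 M, Real.cos ((k:ℝ)*(s-c)))
        (∑ k ∈ Finset.Ico 1 M, -Real.sin ((k:ℝ)*(t-c)) * k) t :=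
      HasDerivAt.fun_sum fun k _ => (inner k t).cos
    exact (h1.add (h2.const_mul 2)).const_mul (1/(N:ℝ))
  constructor
  · rw [hBg]; exact fun t => (hder t).differentiableAt
  · have hdB : ∀ n : Fin N, deriv B (x n) = G (x n) := by
      intro n; rw [hBg]; exact (hder (x n)).deriv
    rw [Finset.sum_congr rfl (fun n _ => hdB n)]
    -- now show ∑ n, G (x n) = 0
    have hNr : (N:ℝ) = 2*(M:ℝ) := by rw [hNM]; push_cast; ring
    have hMsin : ∀ n : Fin N, Real.sin ((M:ℝ)*(x n - c)) = 0 := by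
      intro n
      have e : (M:ℝ)*(x n - c) = (((((n:ℕ):ℤ) - ((i:ℕ):ℤ)) : ℤ) : ℝ) * π := by
        rw [hx n, hc, hx i, hNr]
        have hM0 : (M:ℝ) ≠ 0 := by positivity
        push_cast
        field_simp
      rw [e, Real.sin_int_mul_pi]
    have hksin : ∀ k ∈ Finset.Ico 1 M, ∑ n : Fin N, Real.sin ((k:ℝ)*(x n - c)) = 0 := by
      intro k hk
      rw [Finset.mem_Ico] at hk
      have harg : ∀ n : Fin N, (k:ℝ)*(x n - c) = 2*π*k*(n:ℕ)/N + (-(2*π*k*i/N)) := by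
        intro n
        rw [hx n, hc, hx i]
        field_simp
        ring
      rw [Finset.sum_congr rfl (fun n _ => by rw [harg n])]
      rw [Fin.sum_univ_eq_sum_range (fun m : ℕ => Real.sin (2*π*k*m/N + (-(2*π*k*i/N))))]
      exact sum_sin_shift N k hk.1 (by omega) _
    simp only [hG]
    rw [← Finset.mul_sum]
    rw [Finset.sum_add_distrib]
    have hA : ∑ n : Fin N, -Real.sin ((M:ℝ)*(x n - c)) * (M:ℝ) = 0 :=
      Finset.sum_eq_zero (fun n _ => by rw [hMsin n]; ring)
    have hBB : ∑ n : Fin N, 2 * ∑ k ∈ Finset.Ico 1 M, -Real.sin ((k:ℝ)*(x n - c)) * (k:ℝ) = 0 := by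
      rw [← Finset.mul_sum, Finset.sum_comm]
      rw [Finset.sum_eq_zero (fun k hk => ?_), mul_zero]
      have h1 : ∑ n : Fin N, -Real.sin ((k:ℝ)*(x n - c)) * (k:ℝ)
          = -(k:ℝ) * ∑ n : Fin N, Real.sin ((k:ℝ)*(x n - c)) := by
        rw [Finset.mul_sum]; exact Finset.sum_congr rfl (fun n _ => by ring)
      rw [h1, hksin k hk, mul_zero]
    rw [hA, hBB]
    simp
end

section
/- Let M be a natural number and let P = P_{M+1} be the Legendre polynomial of degree M+1 defined by Rodrigues' formula. Let v_j ∈ ℝ satisfy P′(v_j) = 0 and P(v_j) ≠ 0, and let Q ∈ ℝ[X] be the polynomial with (X − v_j)·Q = (X² − 1)·P′. Then: (i) Q(v_j) = (M+1)(M+2)·P(v_j); (ii) Q(1) = Q(−1) = 0; and (iii) Q(v_m) = 0 for every v_m ≠ v_j with P′(v_m) = 0 and v_m ≠ ±1. Consequently, the polynomial B_j = Q/((M+1)(M+2)·P(v_j)) satisfies B_j(v_j) = 1, B_j(v_m) = 0 at every other zero v_m of P′, and B_j(±1) = 0. -/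
open Polynomial


lemma iter_X_mul (p : Polynomial ℝ) (m : ℕ) :
    derivative^[m+1] (X * p) =
      X * derivative^[m+1] p + ((m : Polynomial ℝ) + 1) * derivative^[m] p := by
  induction m generalizing p with
  | zero => simp [derivative_mul]; ring
  | succ m ih =>
    rw [show m + 1 + 1 = (m+1) + 1 from rfl, Function.iterate_succ_apply', ih]
    simp only [Function.iterate_succ_apply', derivative_mul, derivative_add,
      derivative_X, one_mul, map_ofNat, derivative_ofNat, derivative_natCast,
      derivative_one, Nat.cast_succ]
    push_cast
    ring

lemma iter_sq_mul (p : Polynomial ℝ) (m : ℕ) :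
    derivative^[m+2] ((X^2 - 1) * p) =
      (X^2 - 1) * derivative^[m+2] p
      + (2 * ((m : Polynomial ℝ) + 2)) * (X * derivative^[m+1] p)
      + (((m : Polynomial ℝ) + 2) * ((m : Polynomial ℝ) + 1)) * derivative^[m] p := by
  induction m generalizing p with
  | zero =>
    show derivative (derivative _) = _
    simp [derivative_mul, map_ofNat]
    ring
  | succ m ih =>
    rw [show m + 1 + 2 = (m+2) + 1 from rfl, Function.iterate_succ_apply', ih]
    simp only [Function.iterate_succ_apply', derivative_mul, derivative_add,
      derivative_X, one_mul, map_ofNat, derivative_ofNat, derivative_natCast,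
      derivative_sub, derivative_one, derivative_X_pow, Nat.cast_succ,
      Nat.cast_ofNat, pow_one]
    norm_num
    rw [show (C (2:ℝ)) = (2:Polynomial ℝ) from map_ofNat C 2]
    ring

/-- The Legendre polynomial of degree `n`, defined by Rodrigues' formula
`P_n = (1/(2ⁿ n!)) (d/dX)ⁿ ((X² − 1)ⁿ)` in `ℝ[X]`. -/
noncomputable def legendre (n : ℕ) : Polynomial ℝ :=
  ((1 : ℝ) / (2 ^ n * n.factorial)) • (derivative^[n] ((X ^ 2 - 1) ^ n))

lemma ode_u (M : ℕ) :
    derivative ((X^2 - 1) * derivative (derivative^[M+1] ((X^2 - 1 : Polynomial ℝ)^(M+1)))) =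
      C (((M:ℝ)+1)*((M:ℝ)+2)) * derivative^[M+1] ((X^2 - 1)^(M+1)) := by
  set f : Polynomial ℝ := (X^2-1)^(M+1) with hf
  have h1 : (X^2 - 1) * derivative f = (2*((M : Polynomial ℝ)+1)) * (X * f) := by
    rw [hf, derivative_pow]
    simp only [derivative_sub, derivative_one, derivative_X_pow, Nat.cast_ofNat,
      pow_one, sub_zero, Nat.add_sub_cancel, Nat.cast_succ, map_add, map_natCast, map_one]
    rw [show (C (2:ℝ)) = (2:Polynomial ℝ) from map_ofNat C 2]
    ring
  have h2 := congrArg (derivative^[M+2]) h1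
  have hc : (2*((M : Polynomial ℝ)+1)) = C (2*((M:ℝ)+1)) := by
    rw [map_mul, map_add, map_natCast, map_one,
      show (C (2:ℝ)) = (2:Polynomial ℝ) from map_ofNat C 2]
  have hc3 : (C (((M:ℝ)+1)*((M:ℝ)+2)) : Polynomial ℝ)
      = ((M : Polynomial ℝ)+1)*((M : Polynomial ℝ)+2) := by
    rw [map_mul, map_add, map_add, map_natCast, map_one,
      show (C (2:ℝ)) = (2:Polynomial ℝ) from map_ofNat C 2]
  rw [iter_sq_mul, hc, iterate_derivative_C_mul, iter_X_mul, ← hc,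
    ← Function.iterate_succ_apply derivative (M+2) f,
    ← Function.iterate_succ_apply derivative (M+1) f,
    ← Function.iterate_succ_apply derivative M f] at h2
  simp only [Function.iterate_succ_apply'] at h2
  rw [hc3, derivative_mul, derivative_sub, derivative_one, derivative_X_pow]
  simp only [Function.iterate_succ_apply', Nat.cast_ofNat, pow_one, sub_zero]
  rw [show (C (2:ℝ)) = (2:Polynomial ℝ) from map_ofNat C 2]
  push_cast at h2 ⊢
  linear_combination h2

lemma legendre_ode (M : ℕ) :
    derivative ((X^2 - 1) * derivative (legendre (M+1))) =
      C (((M:ℝ)+1)*((M:ℝ)+2)) * legendre (M+1) := by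
  unfold legendre
  rw [smul_eq_C_mul, derivative_C_mul, mul_left_comm, derivative_C_mul, ode_u]
  ring

/-- Properties of the Legendre Lagrange basis: if `v_j` is a zero of `P′_{M+1}`
with `P_{M+1}(v_j) ≠ 0`, and `Q` is the polynomial with `(X − v_j) Q = (X² − 1) P′_{M+1}`,
then `Q(v_j) = (M+1)(M+2) P_{M+1}(v_j)`, `Q(±1) = 0`, and `Q` vanishes at every other
zero of `P′_{M+1}` different from `±1`. Consequently the Lagrange basis function
`B_j = Q/((M+1)(M+2) P_{M+1}(v_j))` satisfies `B_j(v_j) = 1`, `B_j(v_m) = 0` at every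
other node, and `B_j(±1) = 0`. -/
theorem legendre_lagrange_basis
    (M : ℕ) (vj : ℝ)
    (hvj : (derivative (legendre (M + 1))).eval vj = 0)
    (hPvj : (legendre (M + 1)).eval vj ≠ 0)
    (Q : Polynomial ℝ)
    (hQ : (X - C vj) * Q = (X ^ 2 - 1) * derivative (legendre (M + 1))) :
    Q.eval vj = ((M : ℝ) + 1) * ((M : ℝ) + 2) * (legendre (M + 1)).eval vj ∧
    Q.eval 1 = 0 ∧ Q.eval (-1) = 0 ∧
    (∀ vm : ℝ, vm ≠ vj → (derivative (legendre (M + 1))).eval vm = 0 →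
      vm ≠ 1 → vm ≠ -1 → Q.eval vm = 0) ∧
    ((fun v : ℝ => Q.eval v / (((M : ℝ) + 1) * ((M : ℝ) + 2) * (legendre (M + 1)).eval vj)) vj = 1 ∧
     (∀ vm : ℝ, vm ≠ vj → (derivative (legendre (M + 1))).eval vm = 0 →
        vm ≠ 1 → vm ≠ -1 →
        (fun v : ℝ => Q.eval v / (((M : ℝ) + 1) * ((M : ℝ) + 2) * (legendre (M + 1)).eval vj)) vm = 0) ∧
     (fun v : ℝ => Q.eval v / (((M : ℝ) + 1) * ((M : ℝ) + 2) * (legendre (M + 1)).eval vj)) 1 = 0 ∧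
     (fun v : ℝ => Q.eval v / (((M : ℝ) + 1) * ((M : ℝ) + 2) * (legendre (M + 1)).eval vj)) (-1) = 0) := by
  set P := legendre (M+1) with hP
  set D := derivative P with hD
  set c : ℝ := ((M : ℝ) + 1) * ((M : ℝ) + 2) with hc
  have hcne : c ≠ 0 := by positivity
  have hODE2 : derivative (X^2-1 : Polynomial ℝ) * D + (X^2-1) * derivative D = C c * P := by
    rw [← derivative_mul]; exact legendre_ode M
  have hev : ∀ a : ℝ, 2*a*(D.eval a) + (a^2-1)*((derivative D).eval a) = c * P.eval a := by
    intro a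
    have := congrArg (eval a) hODE2
    simpa [eval_mul, eval_add, eval_sub, eval_pow, one_add_one_eq_two] using this
  -- (i)
  have hd := congrArg derivative hQ
  rw [derivative_mul, derivative_mul, derivative_sub, derivative_X, derivative_C,
    derivative_sub, derivative_one] at hd
  have hi : Q.eval vj = c * P.eval vj := by
    have h := congrArg (eval vj) hd
    have h2 := hev vj
    simp only [eval_add, eval_mul, eval_sub, eval_X, eval_C, eval_one, eval_pow,
      eval_zero, sub_self, zero_mul, mul_zero, sub_zero, one_mul, hvj] at h h2 ⊢
    linarith [h, h2]
  -- vj ≠ ±1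
  have hne1 : vj ≠ 1 := by
    intro h
    have := hev vj
    rw [h] at this hvj hPvj
    simp [hvj] at this
    rcases this with h' | h'
    · exact hcne h'
    · exact hPvj h'
  have hnem1 : vj ≠ -1 := by
    intro h
    have := hev vj
    rw [h] at this hvj hPvj
    simp [hvj] at this
    norm_num at this
    rcases this with h' | h'
    · exact hcne h'
    · exact hPvj h'
  have h1 : Q.eval 1 = 0 := by
    have h : (1 - vj) * Q.eval 1 = 0 := by
      have := congrArg (eval 1) hQ
      simp only [eval_mul, eval_sub, eval_X, eval_C, eval_pow, eval_one] at this
      norm_num at this ⊢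
      tauto
    exact (mul_eq_zero.mp h).resolve_left (sub_ne_zero.mpr (Ne.symm hne1))
  have hm1 : Q.eval (-1) = 0 := by
    have h : (-1 - vj) * Q.eval (-1) = 0 := by
      have := congrArg (eval (-1)) hQ
      simp only [eval_mul, eval_sub, eval_X, eval_C, eval_pow, eval_one] at this
      norm_num at this ⊢
      tauto
    exact (mul_eq_zero.mp h).resolve_left (sub_ne_zero.mpr (Ne.symm hnem1))
  have hvm : ∀ vm : ℝ, vm ≠ vj → D.eval vm = 0 → vm ≠ 1 → vm ≠ -1 → Q.eval vm = 0 := by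
    intro vm hne hDvm _ _
    have h := congrArg (eval vm) hQ
    simp only [eval_mul, eval_sub, eval_X, eval_C, eval_pow, eval_one, hDvm, mul_zero] at h
    rcases mul_eq_zero.mp h with h | h
    · exact absurd (sub_eq_zero.mp h) hne
    · exact h
  have hden : c * P.eval vj ≠ 0 := mul_ne_zero hcne hPvj
  refine ⟨hi, h1, hm1, hvm, ?_, ?_, ?_, ?_⟩
  · simp only [hi]; field_simp
  · intro vm a b d e; simp only [hvm vm a b d e, zero_div]
  · simp only [h1, zero_div]
  · simp only [hm1, zero_div]
end

section
/- For every natural number n ≥ 1, the Legendre polynomial P_n defined by Rodrigues' formula has exactly n roots, all of which are real, simple, and lie in the open interval (−1, 1); that is, there exist n distinct reals v_1 < v_2 < ⋯ < v_n in (−1, 1) such that P_n(v_k) = 0 for each k, and P_n has degree n. -/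
open Polynomial

/-- Rolle's theorem for polynomials. -/
lemma poly_rolle (p : Polynomial ℝ) {a b : ℝ} (hab : a < b)
    (ha : p.eval a = 0) (hb : p.eval b = 0) :
    ∃ c ∈ Set.Ioo a b, p.derivative.eval c = 0 := by
  obtain ⟨c, hc, hc'⟩ := exists_deriv_eq_zero hab
    (p.continuous.continuousOn : ContinuousOn (fun x => p.eval x) (Set.Icc a b))
    (by rw [ha, hb])
  exact ⟨c, hc, by rwa [Polynomial.deriv] at hc'⟩

lemma legendre_base_monic (n : ℕ) : (((X : ℝ[X]) ^ 2 - 1) ^ n).Monic := by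
  have h : ((X : ℝ[X]) ^ 2 - 1) = X ^ 2 - C 1 := by rw [map_one]
  exact (h ▸ monic_X_pow_sub_C (1 : ℝ) two_ne_zero).pow n

lemma legendre_base_natDegree (n : ℕ) :
    (((X : ℝ[X]) ^ 2 - 1) ^ n).natDegree = 2 * n := by
  have h : ((X : ℝ[X]) ^ 2 - 1) = X ^ 2 - C 1 := by rw [map_one]
  rw [natDegree_pow, h, natDegree_X_pow_sub_C, Nat.mul_comm]

lemma iterate_deriv_ne_zero {n k : ℕ} (hk : k ≤ n) :
    derivative^[k] (((X : ℝ[X]) ^ 2 - 1) ^ n) ≠ 0 := by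
  intro h
  have hc := coeff_iterate_derivative (((X : ℝ[X]) ^ 2 - 1) ^ n) (2 * n - k) (k := k)
  rw [h, coeff_zero] at hc
  have hlc : (((X : ℝ[X]) ^ 2 - 1) ^ n).coeff (2 * n) = 1 := by
    conv_lhs => rw [← legendre_base_natDegree n]
    exact (legendre_base_monic n).coeff_natDegree
  have h2 : 2 * n - k + k = 2 * n := by omega
  rw [h2, hlc] at hc
  have hd : (2 * n).descFactorial k ≠ 0 := by
    rw [Ne, Nat.descFactorial_eq_zero_iff_lt]; omega
  rw [nsmul_eq_mul, mul_one] at hc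
  exact hd (by exact_mod_cast hc.symm)

lemma iterate_deriv_natDegree (n : ℕ) :
    (derivative^[n] (((X : ℝ[X]) ^ 2 - 1) ^ n)).natDegree = n := by
  refine le_antisymm ?_ ?_
  · have := natDegree_iterate_derivative (((X : ℝ[X]) ^ 2 - 1) ^ n) n
    rw [legendre_base_natDegree] at this; omega
  · refine le_natDegree_of_ne_zero ?_
    have hc := coeff_iterate_derivative (((X : ℝ[X]) ^ 2 - 1) ^ n) n (k := n)
    have hlc : (((X : ℝ[X]) ^ 2 - 1) ^ n).coeff (2 * n) = 1 := by
      conv_lhs => rw [← legendre_base_natDegree n]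
      exact (legendre_base_monic n).coeff_natDegree
    have h2 : n + n = 2 * n := by omega
    rw [h2, hlc] at hc
    rw [hc, nsmul_eq_mul, mul_one]
    have hd : (2 * n).descFactorial n ≠ 0 := by
      rw [Ne, Nat.descFactorial_eq_zero_iff_lt]; omega
    exact_mod_cast hd

lemma legendre_aux (n : ℕ) : ∀ k, k ≤ n →
    ∃ v : Fin k → ℝ, StrictMono v ∧
      (∀ i, v i ∈ Set.Ioo (-1 : ℝ) 1 ∧
        (derivative^[k] (((X : ℝ[X]) ^ 2 - 1) ^ n)).eval (v i) = 0) ∧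
      n - k ≤ rootMultiplicity 1 (derivative^[k] (((X : ℝ[X]) ^ 2 - 1) ^ n)) ∧
      n - k ≤ rootMultiplicity (-1) (derivative^[k] (((X : ℝ[X]) ^ 2 - 1) ^ n)) := by
  intro k
  induction k with
  | zero =>
    intro _
    refine ⟨Fin.elim0, fun i => i.elim0, fun i => i.elim0, ?_, ?_⟩ <;>
    · rw [Nat.sub_zero, Function.iterate_zero_apply,
        le_rootMultiplicity_iff (pow_ne_zero _ (by
          intro h
          have := natDegree_X_pow_sub_C (n := 2) (r := (1:ℝ))
          rw [show ((X:ℝ[X])^2 - C 1) = X^2 - 1 by rw [map_one], h, natDegree_zero] at this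
          omega))]
      refine pow_dvd_pow_of_dvd (dvd_iff_isRoot.mpr ?_) n
      simp [IsRoot]
  | succ k ih =>
    intro hk1
    have hk : k ≤ n := by omega
    obtain ⟨v, hv, hroot, hm1, hm2⟩ := ih hk
    set q : ℝ[X] := derivative^[k] (((X : ℝ[X]) ^ 2 - 1) ^ n) with hqdef
    have hq0 : q ≠ 0 := iterate_deriv_ne_zero hk
    have hpos : 0 < n - k := by omega
    have hroot1 : q.eval 1 = 0 := (rootMultiplicity_pos hq0).mp (lt_of_lt_of_le hpos hm1)
    have hrootm1 : q.eval (-1) = 0 := (rootMultiplicity_pos hq0).mp (lt_of_lt_of_le hpos hm2)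
    -- the k+2 known zeros of q, in increasing order
    set a : Fin (k + 2) → ℝ := Fin.cons (-1) (Fin.snoc v 1) with hadef
    have hsnoc_mem : ∀ j : Fin (k + 1),
        -1 < (Fin.snoc v (1:ℝ) : Fin (k+1) → ℝ) j := by
      intro j
      refine Fin.lastCases ?_ ?_ j
      · simp
      · intro i
        simp only [Fin.snoc_castSucc]
        exact (hroot i).1.1
    have hlt : ∀ (j : Fin k) (m : Fin (k + 1)), (j : ℕ) < (m : ℕ) →
        v j < (Fin.snoc v (1:ℝ) : Fin (k+1) → ℝ) m := by
      intro j m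
      refine Fin.lastCases ?_ ?_ m
      · intro _
        simpa using (hroot j).1.2
      · intro i hji
        simp only [Fin.snoc_castSucc]
        exact hv (by rwa [Fin.lt_def, ← Fin.coe_castSucc j])
    have ha_mono : StrictMono a := by
      rw [Fin.strictMono_iff_lt_succ]
      intro i
      refine Fin.cases ?_ ?_ i
      · have h1 : a (Fin.castSucc (0 : Fin (k+1))) = -1 := by
          rw [Fin.castSucc_zero, hadef, Fin.cons_zero]
        have h2 : a (Fin.succ (0 : Fin (k+1))) = (Fin.snoc v (1:ℝ) : Fin (k+1) → ℝ) 0 := by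
          rw [hadef, Fin.cons_succ]
        rw [h1, h2]
        exact hsnoc_mem 0
      · intro j
        have h1 : a (Fin.castSucc j.succ) = v j := by
          rw [← Fin.succ_castSucc, hadef, Fin.cons_succ, Fin.snoc_castSucc]
        have h2 : a (Fin.succ j.succ) = (Fin.snoc v (1:ℝ) : Fin (k+1) → ℝ) j.succ := by
          rw [hadef, Fin.cons_succ]
        rw [h1, h2]
        exact hlt j j.succ (by simp)
    have ha_root : ∀ i, q.eval (a i) = 0 := by
      intro i
      refine Fin.cases ?_ ?_ i
      · simpa [hadef] using hrootm1
      · intro j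
        rw [hadef, Fin.cons_succ]
        refine Fin.lastCases ?_ ?_ j
        · simpa using hroot1
        · intro i; simpa using (hroot i).2
    have H : ∀ i : Fin (k + 1), ∃ c, c ∈ Set.Ioo (a i.castSucc) (a i.succ) ∧
        (derivative q).eval c = 0 := by
      intro i
      obtain ⟨c, hc, hc'⟩ := poly_rolle q (ha_mono (Fin.castSucc_lt_succ (i := i)))
        (ha_root _) (ha_root _)
      exact ⟨c, hc, hc'⟩
    choose w hw1 hw2 using H
    have hw_mono : StrictMono w := by
      intro i j hij
      calc w i < a i.succ := (hw1 i).2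
        _ ≤ a j.castSucc := ha_mono.monotone (by
            rw [Fin.le_def]
            simp only [Fin.val_succ, Fin.coe_castSucc]
            exact hij)
        _ < w j := (hw1 j).1
    have ha0 : a 0 = -1 := by rw [hadef]; simp
    have halast : a (Fin.last (k + 1)) = 1 := by
      rw [hadef, ← Fin.succ_last, Fin.cons_succ, Fin.snoc_last]
    have hiter : derivative^[k+1] (((X : ℝ[X]) ^ 2 - 1) ^ n) = derivative q := by
      rw [hqdef, Function.iterate_succ_apply']
    refine ⟨w, hw_mono, ?_, ?_, ?_⟩
    · intro i
      constructor
      · constructor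
        · calc (-1 : ℝ) = a 0 := ha0.symm
            _ ≤ a i.castSucc := ha_mono.monotone (Fin.zero_le _)
            _ < w i := (hw1 i).1
        · calc w i < a i.succ := (hw1 i).2
            _ ≤ a (Fin.last (k+1)) := ha_mono.monotone (Fin.le_last _)
            _ = 1 := halast
      · rw [hiter]; exact hw2 i
    · rw [hiter]
      have := rootMultiplicity_sub_one_le_derivative_rootMultiplicity q 1
      omega
    · rw [hiter]
      have := rootMultiplicity_sub_one_le_derivative_rootMultiplicity q (-1)
      omega

/-- For `n ≥ 1`, the Legendre polynomial `P_n` has degree `n` and exactly `n`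
distinct real roots `v_1 < ⋯ < v_n`, all simple and lying in `(−1, 1)`. -/
theorem legendre_roots_real_simple
    (n : ℕ) (hn : 1 ≤ n) :
    (legendre n).natDegree = n ∧
    ∃ v : Fin n → ℝ, StrictMono v ∧
      ∀ k : Fin n, v k ∈ Set.Ioo (-1 : ℝ) 1 ∧
        (legendre n).eval (v k) = 0 ∧
        (legendre n).rootMultiplicity (v k) = 1 := by
  classical
  obtain ⟨v, hv, hroot, -, -⟩ := legendre_aux n n le_rfl
  set q : ℝ[X] := derivative^[n] (((X : ℝ[X]) ^ 2 - 1) ^ n) with hqdef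
  have hq0 : q ≠ 0 := iterate_deriv_ne_zero le_rfl
  have hdeg : q.natDegree = n := iterate_deriv_natDegree n
  -- simplicity of the roots of q
  have hmult : ∀ i : Fin n, q.rootMultiplicity (v i) = 1 := by
    intro i
    have hs : (Finset.univ.image v).card = n := by
      rw [Finset.card_image_of_injective _ hv.injective, Finset.card_univ, Fintype.card_fin]
    have hsub : Finset.univ.image v ⊆ q.roots.toFinset := by
      intro x hx
      obtain ⟨j, -, rfl⟩ := Finset.mem_image.mp hx
      rw [Multiset.mem_toFinset, mem_roots hq0]
      exact (hroot j).2
    have h1 : n ≤ q.roots.toFinset.card := hs ▸ Finset.card_le_card hsub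
    have h2 : q.roots.toFinset.card ≤ Multiset.card q.roots := Multiset.toFinset_card_le _
    have h3 : Multiset.card q.roots ≤ n := hdeg ▸ q.card_roots'
    have hsum : ∑ x ∈ q.roots.toFinset, q.roots.count x = Multiset.card q.roots :=
      Multiset.toFinset_sum_count_eq _
    have hone : ∀ x ∈ q.roots.toFinset, 1 ≤ q.roots.count x := fun x hx =>
      Multiset.count_pos.mpr (Multiset.mem_toFinset.mp hx)
    have hall : ∀ x ∈ q.roots.toFinset, q.roots.count x = 1 := by
      by_contra hcon
      push_neg at hcon
      obtain ⟨x, hx, hxne⟩ := hcon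
      have hlt : q.roots.toFinset.card < ∑ x ∈ q.roots.toFinset, q.roots.count x := by
        rw [Finset.card_eq_sum_ones]
        exact Finset.sum_lt_sum hone ⟨x, hx, lt_of_le_of_ne (hone x hx) (Ne.symm hxne)⟩
      omega
    have hvi : v i ∈ q.roots.toFinset := hsub (Finset.mem_image_of_mem v (Finset.mem_univ i))
    rw [← count_roots]
    exact hall _ hvi
  -- transfer to legendre n
  have hc : ((1 : ℝ) / (2 ^ n * n.factorial)) ≠ 0 := by
    apply div_ne_zero one_ne_zero
    positivity
  have hleg : legendre n = C ((1 : ℝ) / (2 ^ n * n.factorial)) * q := by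
    rw [legendre, smul_eq_C_mul]
  have hlne : legendre n ≠ 0 := by
    rw [hleg]
    exact mul_ne_zero (by simpa using hc) hq0
  constructor
  · rw [hleg, natDegree_C_mul hc, hdeg]
  · refine ⟨v, hv, fun k => ⟨(hroot k).1, ?_, ?_⟩⟩
    · rw [hleg, eval_mul, (hroot k).2, mul_zero]
    · rw [hleg, rootMultiplicity_mul (hleg ▸ hlne), rootMultiplicity_C, zero_add]
      exact hmult k
end

section
/- Let M ≥ 1 be an integer, and let v_0, …, v_{M−1} ∈ ℝ and w_0, …, w_{M−1} ∈ ℝ be nodes and weights such that Σ_{m=0}^{M−1} w_m·q(v_m) = ∫_ℝ q(v)·exp(−v²) dv for every polynomial q ∈ ℝ[X] of degree at most 2M−1. Then for every polynomial p ∈ ℝ[X] of degree at most 2M−2, Σ_{m=0}^{M−1} w_m·(p′(v_m) − 2·v_m·p(v_m)) = 0. -/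
open Polynomial MeasureTheory

lemma integrable_poly_mul_exp_neg_sq (p : Polynomial ℝ) :
    Integrable (fun u : ℝ => p.eval u * Real.exp (-u ^ 2)) := by
  induction p using Polynomial.induction_on' with
  | add p q hp hq => simpa [add_mul] using hp.fun_add hq
  | monomial n a =>
    have h : Integrable (fun x : ℝ => x ^ n * Real.exp (-x ^ 2)) := by
      have := integrable_rpow_mul_exp_neg_mul_sq (b := 1) one_pos
        (s := (n : ℝ)) (by exact_mod_cast neg_one_lt_zero.trans_le (by positivity))
      simpa [Real.rpow_natCast, one_mul] using this
    simp only [eval_monomial]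
    simpa [mul_assoc] using h.const_mul a

lemma hasDerivAt_poly_mul_exp_neg_sq (p : Polynomial ℝ) (x : ℝ) :
    HasDerivAt (fun u : ℝ => p.eval u * Real.exp (-u ^ 2))
      (((derivative p).eval x - 2 * x * p.eval x) * Real.exp (-x ^ 2)) x := by
  have h1 : HasDerivAt (fun u : ℝ => p.eval u) ((derivative p).eval x) x :=
    p.hasDerivAt x
  have h2 : HasDerivAt (fun u : ℝ => Real.exp (-u ^ 2))
      (Real.exp (-x ^ 2) * (-(2 * x))) x := by
    have hinner : HasDerivAt (fun u : ℝ => -u ^ 2) (-(2 * x)) x := by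
      simpa using (hasDerivAt_pow 2 x).fun_neg
    exact (Real.hasDerivAt_exp (-x ^ 2)).comp x hinner
  have := h1.fun_mul h2
  refine this.congr_deriv ?_
  ring

/-- If a quadrature rule with `M` nodes `v_m` and weights `w_m` is exact against the
weight `exp(−v²)` for all polynomials of degree at most `2M−1`, then for every
polynomial `p` of degree at most `2M−2` one has
`Σ_m w_m (p′(v_m) − 2 v_m p(v_m)) = 0`. -/
theorem quadrature_hermite_sum_vanishes
    (M : ℕ) (hM : 1 ≤ M)
    (v : Fin M → ℝ) (w : Fin M → ℝ)
    (hquad : ∀ q : Polynomial ℝ, q.natDegree ≤ 2 * M - 1 →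
      ∑ m : Fin M, w m * q.eval (v m) = ∫ u : ℝ, q.eval u * Real.exp (-u ^ 2)) :
    ∀ p : Polynomial ℝ, p.natDegree ≤ 2 * M - 2 →
      ∑ m : Fin M, w m * ((derivative p).eval (v m) - 2 * v m * p.eval (v m)) = 0 := by
  intro p hp
  set q : Polynomial ℝ := derivative p - Polynomial.C 2 * Polynomial.X * p with hq
  have hqeval : ∀ x : ℝ, q.eval x = (derivative p).eval x - 2 * x * p.eval x := by
    intro x; simp [hq]
  have hqdeg : q.natDegree ≤ 2 * M - 1 := by
    apply (Polynomial.natDegree_sub_le _ _).trans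
    have h1 : (derivative p).natDegree ≤ 2 * M - 1 :=
      (Polynomial.natDegree_derivative_le p).trans (by omega)
    have h2 : (Polynomial.C 2 * Polynomial.X * p).natDegree ≤ 2 * M - 1 := by
      apply (Polynomial.natDegree_mul_le).trans
      have : (Polynomial.C (2:ℝ) * Polynomial.X).natDegree ≤ 1 :=
        (Polynomial.natDegree_mul_le).trans (by simp)
      omega
    omega
  have key := hquad q hqdeg
  have hzero : (∫ u : ℝ, q.eval u * Real.exp (-u ^ 2)) = 0 := by
    have : (fun u : ℝ => q.eval u * Real.exp (-u ^ 2)) =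
        fun u => ((derivative p).eval u - 2 * u * p.eval u) * Real.exp (-u ^ 2) := by
      funext u; rw [hqeval]
    rw [show (∫ u : ℝ, q.eval u * Real.exp (-u ^ 2)) =
        ∫ u : ℝ, ((derivative p).eval u - 2 * u * p.eval u) * Real.exp (-u ^ 2) by rw [this]]
    apply integral_eq_zero_of_hasDerivAt_of_integrable
      (f := fun u : ℝ => p.eval u * Real.exp (-u ^ 2))
    · exact fun x => hasDerivAt_poly_mul_exp_neg_sq p x
    · have := integrable_poly_mul_exp_neg_sq q
      simpa [hqeval] using this
    · exact integrable_poly_mul_exp_neg_sq p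
  calc ∑ m : Fin M, w m * ((derivative p).eval (v m) - 2 * v m * p.eval (v m))
      = ∑ m : Fin M, w m * q.eval (v m) := by simp_rw [hqeval]
    _ = 0 := by rw [key, hzero]
end

section
/- Let N ≥ 1 and M ≥ 1 be integers. Let v : Fin M → ℝ be injective (distinct velocity nodes) and let w : Fin M → ℝ be weights such that Σ_{m} w(m)·q(v(m)) = ∫_ℝ q(u)·exp(−u²) du for every polynomial q ∈ ℝ[X] of degree at most 2M−1. For j ∈ Fin M let ℓ_j ∈ ℝ[X] be the Lagrange basis polynomial of degree at most M−1 at the nodes v (so ℓ_j(v(m)) = δ_{jm}), and set D(m, j) = ℓ_j′(v(m)). Let A : Fin N → Fin N → ℝ satisfy Σ_{n} A(n, i) = 0 for every i. Let c : Fin N → Fin M → ℝ, Eℓ : Fin N → ℝ, Δt ∈ ℝ, and define c′(n, m) = c(n, m) + Δt·(−v(m)·Σ_{i} A(n, i)·c(i, m) + Eℓ(n)·(Σ_{j} D(m, j)·c(n, j) − 2·v(m)·c(n, m))). Then Σ_{n} Σ_{m} w(m)·c′(n, m) = Σ_{n} Σ_{m} w(m)·c(n, m). -/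
open Polynomial


open Polynomial Filter MeasureTheory Real

lemma integrable_poly_gauss (p : ℝ[X]) :
    Integrable (fun u : ℝ => p.eval u * Real.exp (-u ^ 2)) := by
  induction p using Polynomial.induction_on' with
  | monomial n a =>
    have hn : (-1 : ℝ) < (n : ℝ) := lt_of_lt_of_le (by norm_num) (Nat.cast_nonneg n)
    have h := integrable_rpow_mul_exp_neg_mul_sq one_pos hn
    simp_rw [Real.rpow_natCast, neg_one_mul] at h
    have h2 := h.const_mul a
    refine h2.congr ?_
    refine Filter.Eventually.of_forall fun u => ?_
    simp [eval_monomial]; ring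
  | add p q hp hq =>
    have := hp.add hq
    refine this.congr (Filter.Eventually.of_forall fun u => ?_)
    simp [add_mul]

lemma tendsto_poly_gauss_atTop (p : ℝ[X]) :
    Tendsto (fun u : ℝ => p.eval u * Real.exp (-u ^ 2)) atTop (nhds 0) := by
  have h1 : Tendsto (fun u : ℝ => p.eval u / Real.exp u) atTop (nhds 0) :=
    p.tendsto_div_exp_atTop
  have h2 : Tendsto (fun u : ℝ => Real.exp (u - u ^ 2)) atTop (nhds 0) := by
    apply Real.tendsto_exp_atBot.comp
    apply tendsto_atBot_mono' _ _ tendsto_neg_atTop_atBot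
    filter_upwards [eventually_ge_atTop (2 : ℝ)] with u hu
    nlinarith
  have := h1.mul h2
  rw [mul_zero] at this
  refine this.congr fun u => ?_
  rw [Real.exp_sub, Real.exp_neg]
  field_simp

lemma tendsto_poly_gauss_atBot (p : ℝ[X]) :
    Tendsto (fun u : ℝ => p.eval u * Real.exp (-u ^ 2)) atBot (nhds 0) := by
  have h := (tendsto_poly_gauss_atTop (p.comp (-X))).comp tendsto_neg_atBot_atTop
  refine Tendsto.congr (fun u => ?_) h
  simp [Function.comp, eval_comp]

lemma integral_deriv_gauss (p : ℝ[X]) :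
    ∫ u : ℝ, ((derivative p).eval u - 2 * u * p.eval u) * Real.exp (-u ^ 2) = 0 := by
  set F : ℝ → ℝ := fun u => p.eval u * Real.exp (-u ^ 2) with hF
  set g : ℝ → ℝ := fun u => ((derivative p).eval u - 2 * u * p.eval u) * Real.exp (-u ^ 2)
    with hg
  have hderiv : ∀ u : ℝ, HasDerivAt F (g u) u := by
    intro u
    have h1 : HasDerivAt (fun x : ℝ => p.eval x) ((derivative p).eval u) u :=
      p.hasDerivAt u
    have h2 : HasDerivAt (fun x : ℝ => Real.exp (-x ^ 2))
        (Real.exp (-u ^ 2) * (-(2 * u))) u := by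
      have hp : HasDerivAt (fun x : ℝ => -x ^ 2) (-(2 * u)) u := by
        simpa [Pi.neg_def] using (hasDerivAt_pow 2 u).neg
      exact hp.exp
    have := h1.fun_mul h2
    refine this.congr_deriv ?_
    show _ = ((derivative p).eval u - 2 * u * p.eval u) * Real.exp (-u ^ 2); ring
  have hint : Integrable g := by
    have h := integrable_poly_gauss (derivative p - C 2 * (X * p))
    refine h.congr (Filter.Eventually.of_forall fun u => ?_)
    simp [hg]; ring
  have htop := tendsto_poly_gauss_atTop p
  have hbot := tendsto_poly_gauss_atBot p
  have hIic : ∫ u in Set.Iic (0:ℝ), g u = F 0 - 0 :=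
    integral_Iic_of_hasDerivAt_of_tendsto (hderiv 0).continuousAt.continuousWithinAt
      (fun x _ => hderiv x) hint.integrableOn hbot
  have hIoi : ∫ u in Set.Ioi (0:ℝ), g u = 0 - F 0 :=
    integral_Ioi_of_hasDerivAt_of_tendsto (hderiv 0).continuousAt.continuousWithinAt
      (fun x _ => hderiv x) hint.integrableOn htop
  have := intervalIntegral.integral_Iic_add_Ioi (b := (0:ℝ)) hint.integrableOn hint.integrableOn
  rw [← this, hIic, hIoi]
  ring

/-- Discrete mass conservation for one step of the first-order semi-Lagrangian
Fourier–Hermite scheme: with Gauss–Hermite-type weights `w` exact for polynomials of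
degree `≤ 2M−1` against `exp(−v²)`, the velocity differentiation matrix
`D(m,j) = ℓ_j′(v_m)` built from the Lagrange basis polynomials at the nodes `v`,
and a spatial differentiation matrix `A` with vanishing column sums, the update
`c′(n,m) = c(n,m) + Δt(−v_m Σ_i A(n,i) c(i,m) + Eℓ(n)(Σ_j D(m,j) c(n,j) − 2 v_m c(n,m)))`
preserves the weighted total `Σ_{n,m} w_m c(n,m)`. -/
theorem discrete_mass_conservation_fourier_hermite
    (N M : ℕ) (hN : 1 ≤ N) (hM : 1 ≤ M)
    (v : Fin M → ℝ) (hv : Function.Injective v)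
    (w : Fin M → ℝ)
    (hquad : ∀ q : Polynomial ℝ, q.natDegree ≤ 2 * M - 1 →
      ∑ m : Fin M, w m * q.eval (v m) = ∫ u : ℝ, q.eval u * Real.exp (-u ^ 2))
    (ℓ : Fin M → Polynomial ℝ)
    (hℓdeg : ∀ j : Fin M, (ℓ j).natDegree ≤ M - 1)
    (hℓeval : ∀ j m : Fin M, (ℓ j).eval (v m) = if j = m then 1 else 0)
    (D : Fin M → Fin M → ℝ)
    (hD : ∀ m j : Fin M, D m j = (derivative (ℓ j)).eval (v m))
    (A : Fin N → Fin N → ℝ) (hA : ∀ i : Fin N, ∑ n : Fin N, A n i = 0)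
    (c : Fin N → Fin M → ℝ) (Eℓ : Fin N → ℝ) (Δt : ℝ)
    (c' : Fin N → Fin M → ℝ)
    (hc' : ∀ (n : Fin N) (m : Fin M),
      c' n m = c n m + Δt * (-(v m) * (∑ i : Fin N, A n i * c i m)
        + Eℓ n * ((∑ j : Fin M, D m j * c n j) - 2 * v m * c n m))) :
    ∑ n : Fin N, ∑ m : Fin M, w m * c' n m
      = ∑ n : Fin N, ∑ m : Fin M, w m * c n m := by
  -- Key per-basis-function identity: ∑_m w m * (D m j - 2 v m δ_{jm}) = 0
  have hkey : ∀ j : Fin M,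
      ∑ m : Fin M, w m * (D m j - 2 * v m * (if j = m then 1 else 0)) = 0 := by
    intro j
    set q : Polynomial ℝ := derivative (ℓ j) - Polynomial.C 2 * (Polynomial.X * ℓ j) with hq
    have hdeg : q.natDegree ≤ 2 * M - 1 := by
      refine le_trans (Polynomial.natDegree_sub_le _ _) (max_le ?_ ?_)
      · exact le_trans (Polynomial.natDegree_derivative_le _)
          (le_trans (Nat.sub_le_sub_right (hℓdeg j) 1) (by omega))
      · refine le_trans (Polynomial.natDegree_mul_le) ?_
        have h2 : (Polynomial.X * ℓ j).natDegree ≤ 1 + (M - 1) :=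
          le_trans Polynomial.natDegree_mul_le
            (add_le_add Polynomial.natDegree_X_le (hℓdeg j))
        simpa using le_trans h2 (by omega)
    have heval : ∀ m : Fin M,
        q.eval (v m) = D m j - 2 * v m * (if j = m then 1 else 0) := by
      intro m
      simp [hq, hD m j, ← hℓeval j m]
      ring
    have h1 : ∑ m : Fin M, w m * q.eval (v m)
        = ∫ u : ℝ, q.eval u * Real.exp (-u ^ 2) := hquad q hdeg
    have h2 : (∫ u : ℝ, q.eval u * Real.exp (-u ^ 2)) = 0 := by
      rw [← integral_deriv_gauss (ℓ j)]
      refine MeasureTheory.integral_congr_ae (Filter.Eventually.of_forall fun u => ?_)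
      simp [hq]
      ring
    calc ∑ m : Fin M, w m * (D m j - 2 * v m * (if j = m then 1 else 0))
        = ∑ m : Fin M, w m * q.eval (v m) := by
          exact Finset.sum_congr rfl fun m _ => by rw [heval m]
      _ = 0 := by rw [h1, h2]
  -- The transport term vanishes by column sums of A
  have hT1 : ∑ n : Fin N, ∑ m : Fin M,
      w m * (-(v m) * ∑ i : Fin N, A n i * c i m) = 0 := by
    rw [Finset.sum_comm]
    refine Finset.sum_eq_zero fun m _ => ?_
    have : ∀ n : Fin N, w m * (-(v m) * ∑ i : Fin N, A n i * c i m)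
        = ∑ i : Fin N, w m * (-(v m)) * c i m * A n i := by
      intro n
      rw [Finset.mul_sum, Finset.mul_sum]
      exact Finset.sum_congr rfl fun i _ => by ring
    simp_rw [this]
    rw [Finset.sum_comm]
    refine Finset.sum_eq_zero fun i _ => ?_
    rw [← Finset.mul_sum, hA i, mul_zero]
  -- The field term vanishes by the key identity
  have hT2 : ∀ n : Fin N, ∑ m : Fin M,
      w m * (Eℓ n * ((∑ j : Fin M, D m j * c n j) - 2 * v m * c n m)) = 0 := by
    intro n
    have hc : ∀ m : Fin M, c n m = ∑ j : Fin M, (if j = m then 1 else 0) * c n j := by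
      intro m
      simp [Finset.sum_ite_eq]
    have step : ∀ m : Fin M,
        w m * (Eℓ n * ((∑ j : Fin M, D m j * c n j) - 2 * v m * c n m))
        = ∑ j : Fin M, Eℓ n * c n j
            * (w m * (D m j - 2 * v m * (if j = m then 1 else 0))) := by
      intro m
      conv_lhs => rw [hc m]
      rw [Finset.mul_sum, ← Finset.sum_sub_distrib, Finset.mul_sum, Finset.mul_sum]
      exact Finset.sum_congr rfl fun j _ => by ring
    simp_rw [step]
    rw [Finset.sum_comm]
    refine Finset.sum_eq_zero fun j _ => ?_
    rw [← Finset.mul_sum, hkey j, mul_zero]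
  -- Put everything together
  simp_rw [hc', mul_add, Finset.sum_add_distrib]
  have hB : ∑ n : Fin N, ∑ m : Fin M,
      w m * (Δt * (-(v m) * ∑ i : Fin N, A n i * c i m)) = 0 := by
    have h : ∀ (n : Fin N) (m : Fin M),
        w m * (Δt * (-(v m) * ∑ i : Fin N, A n i * c i m))
        = Δt * (w m * (-(v m) * ∑ i : Fin N, A n i * c i m)) := fun n m => by ring
    simp_rw [h, ← Finset.mul_sum]
    rw [hT1, mul_zero]
  have hC : ∑ n : Fin N, ∑ m : Fin M,
      w m * (Δt * (Eℓ n * ((∑ j : Fin M, D m j * c n j) - 2 * v m * c n m))) = 0 := by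
    have h : ∀ (n : Fin N) (m : Fin M),
        w m * (Δt * (Eℓ n * ((∑ j : Fin M, D m j * c n j) - 2 * v m * c n m)))
        = Δt * (w m * (Eℓ n * ((∑ j : Fin M, D m j * c n j) - 2 * v m * c n m))) :=
      fun n m => by ring
    simp_rw [h, ← Finset.mul_sum]
    rw [Finset.sum_eq_zero fun n _ => hT2 n, mul_zero]
  rw [hB, hC]
  simp
end
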